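/- Let A be a unital complex *-algebra, let H be a complex Hilbert space, let D be a dense ℂ-subspace of H, and let π be a representation of A on D. Let a, b ∈ A be selfadjoint elements with a*b = b*a such that neither i nor -i lies in the spectrum of a nor in the spectrum of b, and put c := a + i·b. Then the densely defined operators T_a and T_b are essentially self-adjoint, T_c is closable, and the closure of T_c is the sum of the closure of T_a and i times the closure of T_b: the domain of the closure of T_c equals the intersection of the domains of the closures of T_a and T_b, and on this intersection (closure T_c) x = (closure T_a) x + i • (closure T_b) x. -/

import Mathlib

open scoped InnerProductSpace

set_option linter.unusedSectionVars false

namespace Stmt3Aux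

variable {H : Type*} [NormedAddCommGroup H] [InnerProductSpace ℂ H] [CompleteSpace H]

/-- Symmetry of a partially defined operator. -/
def Sym (T : H →ₗ.[ℂ] H) : Prop :=
  ∀ x y : T.domain, ⟪(T x : H), (y : H)⟫_ℂ = ⟪(x : H), (T y : H)⟫_ℂ

theorem pairing_graph {T : H →ₗ.[ℂ] H} (hT : Sym T)
    {p q : H × H} (hp : p ∈ closure (T.graph : Set (H × H)))
    (hq : q ∈ closure (T.graph : Set (H × H))) :
    ⟪p.2, q.1⟫_ℂ = ⟪p.1, q.2⟫_ℂ := by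
  have h1 : ∀ q' ∈ (T.graph : Set (H × H)), ∀ p' ∈ closure (T.graph : Set (H × H)),
      ⟪p'.2, q'.1⟫_ℂ = ⟪p'.1, q'.2⟫_ℂ := by
    intro q' hq' p' hp'
    have hcl : IsClosed {p'' : H × H | ⟪p''.2, q'.1⟫_ℂ = ⟪p''.1, q'.2⟫_ℂ} :=
      isClosed_eq (continuous_snd.inner continuous_const) (continuous_fst.inner continuous_const)
    refine closure_minimal ?_ hcl hp'
    intro r hr
    rcases T.mem_graph_iff.mp hr with ⟨u, hu1, hu2⟩
    rcases T.mem_graph_iff.mp hq' with ⟨v, hv1, hv2⟩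
    simp only [Set.mem_setOf_eq, ← hu1, ← hu2, ← hv1, ← hv2]
    exact hT u v
  have h2 : ∀ p' ∈ closure (T.graph : Set (H × H)),
      ∀ q'' ∈ closure (T.graph : Set (H × H)), ⟪p'.2, q''.1⟫_ℂ = ⟪p'.1, q''.2⟫_ℂ := by
    intro p' hp' q'' hq''
    have hcl : IsClosed {q' : H × H | ⟪p'.2, q'.1⟫_ℂ = ⟪p'.1, q'.2⟫_ℂ} :=
      isClosed_eq (continuous_const.inner continuous_fst) (continuous_const.inner continuous_snd)
    refine closure_minimal (fun r hr => h1 r hr p' hp') hcl hq''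
  exact h2 p hp q hq

theorem Sym.isClosable {T : H →ₗ.[ℂ] H} (hT : Sym T) (hd : Dense (T.domain : Set H)) :
    T.IsClosable := by
  have hg : ∀ x ∈ T.graph.topologicalClosure, x.1 = (0 : H) → x.2 = (0 : H) := by
    intro x hx hx1
    have hx' : x ∈ closure (T.graph : Set (H × H)) := by
      rwa [← Submodule.topologicalClosure_coe]
    refine hd.eq_zero_of_inner_left ℂ fun v hv => ?_
    have := pairing_graph hT hx' (subset_closure (T.mem_graph ⟨v, hv⟩))
    rwa [hx1, inner_zero_left] at this
  exact ⟨T.graph.topologicalClosure.toLinearPMap,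
    (Submodule.toLinearPMap_graph_eq _ hg).symm⟩

theorem mem_closure_graph {T : H →ₗ.[ℂ] H} (hT : T.IsClosable) (x : T.closure.domain) :
    ((x : H), (T.closure x : H)) ∈ closure (T.graph : Set (H × H)) := by
  rw [← Submodule.topologicalClosure_coe, hT.graph_closure_eq_closure_graph]
  exact T.closure.mem_graph x

theorem closure_apply_of_mem_closure {T : H →ₗ.[ℂ] H} (hT : T.IsClosable) {x y : H}
    (h : (x, y) ∈ closure (T.graph : Set (H × H))) :
    ∃ hx : x ∈ T.closure.domain, T.closure ⟨x, hx⟩ = y := by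
  rw [← Submodule.topologicalClosure_coe, hT.graph_closure_eq_closure_graph] at h
  rcases T.closure.mem_graph_iff.mp h with ⟨v, hv1, hv2⟩
  simp only at hv1 hv2
  have hx : x ∈ T.closure.domain := hv1 ▸ v.2
  refine ⟨hx, ?_⟩
  rw [← hv2]
  congr 1
  exact Subtype.ext hv1.symm

theorem Sym.closure {T : H →ₗ.[ℂ] H} (hT : Sym T) (hc : T.IsClosable) : Sym T.closure :=
  fun x y => pairing_graph hT (mem_closure_graph hc x) (mem_closure_graph hc y)



theorem sym_bound {T : H →ₗ.[ℂ] H} (hT : Sym T) (t : ℝ) (x : T.domain) :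
    |t| * ‖(x : H)‖ ≤ ‖(T x : H) - ((t : ℂ) * Complex.I) • (x : H)‖ := by
  have hreal : (⟪(T x : H), (x : H)⟫_ℂ).im = 0 := by
    have h1 : ⟪(T x : H), (x : H)⟫_ℂ = ⟪(x : H), (T x : H)⟫_ℂ := hT x x
    have h2 : ⟪(x : H), (T x : H)⟫_ℂ = starRingEnd ℂ ⟪(T x : H), (x : H)⟫_ℂ :=
      (inner_conj_symm _ _).symm
    have := h1.trans h2
    have him := congrArg Complex.im this
    simp only [Complex.conj_im] at him
    linarith
  have hre : RCLike.re ⟪(T x : H), ((t : ℂ) * Complex.I) • (x : H)⟫_ℂ = (0 : ℝ) := by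
    rw [inner_smul_right]
    simp [RCLike.re_to_complex, Complex.mul_re, Complex.mul_im, hreal]
  have hsq : ‖(T x : H) - ((t : ℂ) * Complex.I) • (x : H)‖ ^ 2
      = ‖(T x : H)‖ ^ 2 + t ^ 2 * ‖(x : H)‖ ^ 2 := by
    rw [@norm_sub_sq ℂ, hre]
    have : ‖((t : ℂ) * Complex.I) • (x : H)‖ = |t| * ‖(x : H)‖ := by
      rw [norm_smul]
      simp [Complex.norm_mul]
    rw [this, mul_pow, sq_abs]
    ring
  nlinarith [hsq, sq_abs t, norm_nonneg ((T x : H) - ((t : ℂ) * Complex.I) • (x : H)),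
    norm_nonneg (x : H), sq_nonneg (‖(T x : H)‖), abs_nonneg t,
    mul_nonneg (abs_nonneg t) (norm_nonneg (x : H))]

/-- `R` is a (bounded, everywhere-defined) right inverse for `S - μ`. -/
def Res (S : H →ₗ.[ℂ] H) (μ : ℂ) (R : H →L[ℂ] H) : Prop :=
  ∀ h : H, ∃ hm : R h ∈ S.domain, S ⟨R h, hm⟩ = h + μ • R h

theorem Res.norm_le {S : H →ₗ.[ℂ] H} (hS : Sym S) {t : ℝ} {R : H →L[ℂ] H}
    (hR : Res S ((t : ℂ) * Complex.I) R) (h : H) : |t| * ‖R h‖ ≤ ‖h‖ := by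
  rcases hR h with ⟨hm, hv⟩
  have := sym_bound hS t (⟨R h, hm⟩ : S.domain)
  rw [hv] at this
  simpa using this

theorem Res.unique {S : H →ₗ.[ℂ] H} (hS : Sym S) {t : ℝ} (ht : t ≠ 0) {R : H →L[ℂ] H}
    (hR : Res S ((t : ℂ) * Complex.I) R) (x : S.domain) :
    R ((S x : H) - ((t : ℂ) * Complex.I) • (x : H)) = (x : H) := by
  rcases hR ((S x : H) - ((t : ℂ) * Complex.I) • (x : H)) with ⟨hm, hv⟩
  set y : S.domain := ⟨R ((S x : H) - ((t : ℂ) * Complex.I) • (x : H)), hm⟩ with hy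
  have hcoe : ((y - x : S.domain) : H)
      = R ((S x : H) - ((t : ℂ) * Complex.I) • (x : H)) - (x : H) := rfl
  have hsub : (S (y - x) : H) - ((t : ℂ) * Complex.I) • ((y - x : S.domain) : H) = 0 := by
    rw [S.map_sub, hv, hcoe]
    generalize (S x : H) = u
    generalize (R (u - ((t : ℂ) * Complex.I) • ((x : S.domain) : H))) = r
    module
  have := sym_bound hS t (y - x)
  rw [hsub, norm_zero] at this
  have h0 : ‖((y - x : S.domain) : H)‖ = 0 := by
    have ht' : 0 < |t| := abs_pos.mpr ht
    nlinarith [norm_nonneg ((y - x : S.domain) : H)]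
  have : ((y - x : S.domain) : H) = 0 := norm_eq_zero.mp h0
  have : (y : H) = (x : H) := by
    have := sub_eq_zero.mp this
    simpa using this
  simpa [hy] using this



theorem Res.opNorm_le {S : H →ₗ.[ℂ] H} (hS : Sym S) {t : ℝ} (ht : 0 < t) {R : H →L[ℂ] H}
    (hR : Res S ((t : ℂ) * Complex.I) R) : ‖R‖ ≤ 1 / t := by
  refine R.opNorm_le_bound (by positivity) fun h => ?_
  have := hR.norm_le hS h
  rw [abs_of_pos ht] at this
  rw [div_mul_eq_mul_div, le_div_iff₀ ht]
  nlinarith [this]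

theorem Res.step {S : H →ₗ.[ℂ] H} (hS : Sym S) {t : ℝ} (ht : 0 < t) {R : H →L[ℂ] H}
    (hR : Res S ((t : ℂ) * Complex.I) R) {t' : ℝ} (ht'0 : 0 < t') (ht' : t' < 2 * t) :
    ∃ R', Res S ((t' : ℂ) * Complex.I) R' := by
  set c : ℂ := (((t - t' : ℝ)) : ℂ) * Complex.I with hcdef
  set x : H →L[ℂ] H := -(c • R) with hxdef
  have hcn : ‖c‖ = |t - t'| := by
    rw [hcdef, norm_mul, Complex.norm_I, mul_one, Complex.norm_real, Real.norm_eq_abs]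
  have hx : ‖x‖ < 1 := by
    rw [hxdef, norm_neg, norm_smul, hcn]
    have h1 : ‖R‖ ≤ 1 / t := hR.opNorm_le hS ht
    have h2 : |t - t'| < t := by
      rw [abs_lt]; constructor <;> linarith
    calc |t - t'| * ‖R‖ ≤ |t - t'| * (1 / t) := by
          exact mul_le_mul_of_nonneg_left h1 (abs_nonneg _)
      _ < t * (1 / t) := by
          apply mul_lt_mul_of_pos_right h2
          positivity
      _ = 1 := by field_simp
  set u : (H →L[ℂ] H)ˣ := Units.oneSub x hx with hudef
  set V : H →L[ℂ] H := ↑u⁻¹ with hVdef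
  have hMV : ∀ h : H, (V h + c • R (V h)) = h := by
    intro h
    have h1 : ((↑u * ↑u⁻¹ : H →L[ℂ] H)) h = h := by
      rw [u.mul_inv]; rfl
    rw [ContinuousLinearMap.mul_apply] at h1
    have h2 : (↑u : H →L[ℂ] H) = 1 - x := rfl
    rw [h2] at h1
    simpa [hxdef, ContinuousLinearMap.sub_apply, ContinuousLinearMap.one_apply,
      ContinuousLinearMap.neg_apply, ContinuousLinearMap.smul_apply, sub_neg_eq_add,
      ← hVdef] using h1
  refine ⟨R.comp V, fun h => ?_⟩
  obtain ⟨hm, hv⟩ := hR (V h)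
  refine ⟨hm, ?_⟩
  show S ⟨R (V h), hm⟩ = h + ((t' : ℂ) * Complex.I) • (R.comp V) h
  have hc : c + (t' : ℂ) * Complex.I = (t : ℂ) * Complex.I := by
    rw [hcdef]; push_cast; ring
  have hcomp : (R.comp V) h = R (V h) := rfl
  have hkey : V h + ((t : ℂ) * Complex.I) • R (V h)
      = h + ((t' : ℂ) * Complex.I) • R (V h) := by
    calc V h + ((t : ℂ) * Complex.I) • R (V h)
        = (V h + c • R (V h)) + ((t' : ℂ) * Complex.I) • R (V h) := by
          rw [← hc, add_smul]; abel
      _ = h + ((t' : ℂ) * Complex.I) • R (V h) := by rw [hMV h]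
  rw [hcomp, hv, hkey]

theorem Res.exists_of_pos {S : H →ₗ.[ℂ] H} (hS : Sym S) {R1 : H →L[ℂ] H}
    (hR1 : Res S (((1 : ℝ) : ℂ) * Complex.I) R1) (t : ℝ) (ht : 0 < t) :
    ∃ R, Res S ((t : ℂ) * Complex.I) R := by
  have hk : ∀ k : ℕ, ∃ R, Res S ((((7 / 4 : ℝ) ^ k : ℝ) : ℂ) * Complex.I) R := by
    intro k
    induction k with
    | zero => exact ⟨R1, by simpa using hR1⟩
    | succ k ih =>
      obtain ⟨R, hR⟩ := ih
      have hp : (0 : ℝ) < (7 / 4 : ℝ) ^ k := by positivity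
      exact Res.step hS hp hR (by positivity) (by rw [pow_succ]; nlinarith)
  obtain ⟨k, hk'⟩ := pow_unbounded_of_one_lt t (by norm_num : (1 : ℝ) < 7 / 4)
  obtain ⟨R, hR⟩ := hk k
  have hp : (0 : ℝ) < (7 / 4 : ℝ) ^ k := by positivity
  exact Res.step hS hp hR ht (by nlinarith)



theorem Res.commute_mem {S : H →ₗ.[ℂ] H} (hS : Sym S) {t : ℝ} (ht : t ≠ 0) {R : H →L[ℂ] H}
    (hR : Res S ((t : ℂ) * Complex.I) R) (B : H →L[ℂ] H)
    (hcomm : ∀ h, B (R h) = R (B h)) {x : H} (hx : x ∈ S.domain) :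
    ∃ h2 : B x ∈ S.domain, S ⟨B x, h2⟩ = B (S ⟨x, hx⟩) := by
  have hux := hR.unique hS ht ⟨x, hx⟩
  simp only [Submodule.coe_mk] at hux
  obtain ⟨hm, hv⟩ := hR (B ((S ⟨x, hx⟩ : H) - ((t : ℂ) * Complex.I) • x))
  have hBx : B x = R (B ((S ⟨x, hx⟩ : H) - ((t : ℂ) * Complex.I) • x)) := by
    rw [← hcomm, hux]
  have hm2 : B x ∈ S.domain := by rw [hBx]; exact hm
  refine ⟨hm2, ?_⟩
  have hveq : S ⟨B x, hm2⟩ = S ⟨R (B ((S ⟨x, hx⟩ : H) - ((t : ℂ) * Complex.I) • x)), hm⟩ := by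
    congr 1
    exact Subtype.ext hBx
  rw [hveq, hv, ← hBx]
  have hs : (S ⟨x, hx⟩ : H)
      = ((S ⟨x, hx⟩ : H) - ((t : ℂ) * Complex.I) • x) + ((t : ℂ) * Complex.I) • x := by
    abel
  conv_rhs => rw [hs]
  rw [map_add, map_smul]

theorem Res.commute_clm {S : H →ₗ.[ℂ] H} (hS : Sym S) {t' : ℝ} (ht' : t' ≠ 0) {R' : H →L[ℂ] H}
    (hR' : Res S ((t' : ℂ) * Complex.I) R') (B : H →L[ℂ] H)
    (hB : ∀ (x : H) (hx : x ∈ S.domain), ∃ h2 : B x ∈ S.domain, S ⟨B x, h2⟩ = B (S ⟨x, hx⟩))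
    (h : H) : B (R' h) = R' (B h) := by
  obtain ⟨hm, hv⟩ := hR' h
  obtain ⟨hm2, hv2⟩ := hB (R' h) hm
  have hkey : (S ⟨B (R' h), hm2⟩ : H) - ((t' : ℂ) * Complex.I) • (B (R' h)) = B h := by
    rw [hv2, hv, map_add, map_smul]
    abel
  have hu := hR'.unique hS ht' ⟨B (R' h), hm2⟩
  simp only [Submodule.coe_mk] at hu
  rw [hkey] at hu
  exact hu.symm

theorem tendsto_of_bounds (A : ℕ → H →L[ℂ] H) (S : H →ₗ.[ℂ] H)
    (hdense : Dense (S.domain : Set H))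
    (h1 : ∀ (n : ℕ) (v : H), ‖A n v‖ ≤ ‖v‖)
    (h2 : ∀ (n : ℕ) (x : S.domain), ‖A n (x : H) - (x : H)‖ ≤ ‖(S x : H)‖ / (n + 1)) (v : H) :
    Filter.Tendsto (fun n => A n v) Filter.atTop (nhds v) := by
  rw [Metric.tendsto_atTop]
  intro ε hε
  obtain ⟨d, hd1, hd2⟩ := (Metric.dense_iff.mp hdense v (ε / 4) (by positivity))
  rw [Metric.mem_ball] at hd1
  set dd : S.domain := ⟨d, hd2⟩ with hdd
  obtain ⟨N, hN⟩ := exists_nat_gt (‖(S dd : H)‖ / (ε / 4))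
  refine ⟨N, fun n hn => ?_⟩
  have hb1 : ‖A n v - A n d‖ ≤ ‖v - d‖ := by
    rw [← map_sub]
    exact h1 n _
  have hb2 : ‖A n d - d‖ ≤ ‖(S dd : H)‖ / (n + 1) := h2 n dd
  have hb3 : ‖(S dd : H)‖ / (n + 1) < ε / 4 := by
    have hnn : (N : ℝ) ≤ n := by exact_mod_cast hn
    have h4 : (0 : ℝ) < ε / 4 := by positivity
    have : ‖(S dd : H)‖ < (N : ℝ) * (ε / 4) := by
      rw [div_lt_iff₀ h4] at hN
      linarith
    rw [div_lt_iff₀ (by positivity : (0 : ℝ) < (n : ℝ) + 1)]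
    have : (N : ℝ) * (ε / 4) ≤ ((n : ℝ) + 1) * (ε / 4) := by nlinarith
    nlinarith
  have hvd : ‖v - d‖ < ε / 4 := by
    rw [← dist_eq_norm, dist_comm]
    exact hd1
  rw [dist_eq_norm]
  calc ‖A n v - v‖ = ‖(A n v - A n d) + (A n d - d) + (d - v)‖ := by congr 1; abel
    _ ≤ ‖(A n v - A n d) + (A n d - d)‖ + ‖d - v‖ := norm_add_le _ _
    _ ≤ ‖A n v - A n d‖ + ‖A n d - d‖ + ‖d - v‖ := by
        have := norm_add_le (A n v - A n d) (A n d - d)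
        linarith
    _ < ε / 4 + ε / 4 + ε / 4 := by
        have h5 : ‖d - v‖ < ε / 4 := by rwa [norm_sub_rev]
        have h6 : ‖A n d - d‖ < ε / 4 := lt_of_le_of_lt hb2 hb3
        have h7 : ‖A n v - A n d‖ < ε / 4 := lt_of_le_of_lt hb1 hvd
        linarith
    _ < ε := by linarith



theorem selfAdjoint_of_res {S : H →ₗ.[ℂ] H} (hS : Sym S) (hdense : Dense (S.domain : Set H))
    {Rp Rm : H →L[ℂ] H} (hRp : Res S Complex.I Rp) (hRm : Res S (-Complex.I) Rm) :
    IsSelfAdjoint S := by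
  rw [LinearPMap.isSelfAdjoint_def]
  have hfa : S.IsFormalAdjoint S := fun x y => hS x y
  have h2 : S ≤ S.adjoint := hfa.le_adjoint hdense
  have hform := LinearPMap.adjoint_isFormalAdjoint hdense
  -- main step : every y in the domain of the adjoint lies in the domain of S with equal value
  have hmain : ∀ y : S.adjoint.domain, ∃ hy : (y : H) ∈ S.domain,
      S ⟨(y : H), hy⟩ = S.adjoint y := by
    intro y
    set w : H := S.adjoint y with hw
    obtain ⟨hm0, hv0⟩ := hRm (w + Complex.I • (y : H))
    set x₀ : H := Rm (w + Complex.I • (y : H)) with hx₀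
    -- key orthogonality
    have hker : ∀ u : S.domain, ⟪(y : H) - x₀, (S u : H) - Complex.I • (u : H)⟫_ℂ = 0 := by
      intro u
      have e1 : ⟪(y : H), (S u : H)⟫_ℂ = ⟪w, (u : H)⟫_ℂ := (hform y u).symm
      have e2 : ⟪x₀, (S u : H)⟫_ℂ = ⟪(S ⟨x₀, hm0⟩ : H), (u : H)⟫_ℂ := (hS ⟨x₀, hm0⟩ u).symm
      have e3 : (S ⟨x₀, hm0⟩ : H) = w + Complex.I • (y : H) - Complex.I • x₀ := by
        rw [hv0]
        simp only [neg_smul]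
        abel
      rw [inner_sub_left, inner_sub_right, inner_sub_right, e1, e2, e3]
      rw [inner_smul_right, inner_smul_right]
      rw [inner_sub_left, inner_add_left, inner_smul_left, inner_smul_left]
      simp only [Complex.conj_I]
      ring
    have hy0 : (y : H) - x₀ = 0 := by
      rw [← inner_self_eq_zero (𝕜 := ℂ)]
      obtain ⟨hmp, hvp⟩ := hRp ((y : H) - x₀)
      have := hker ⟨Rp ((y : H) - x₀), hmp⟩
      rw [hvp] at this
      simpa using this
    have hyx : (y : H) = x₀ := sub_eq_zero.mp hy0
    have hy : (y : H) ∈ S.domain := by rw [hyx]; exact hm0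
    refine ⟨hy, ?_⟩
    have : S ⟨(y : H), hy⟩ = S ⟨x₀, hm0⟩ := by congr 1; exact Subtype.ext hyx
    rw [this, hv0, ← hx₀, ← hyx, neg_smul]
    abel
  have h1 : S.adjoint ≤ S := by
    constructor
    · intro z hz
      exact (hmain ⟨z, hz⟩).1
    · intro x y' hxy
      obtain ⟨hy, hv⟩ := hmain x
      rw [← hv]
      congr 1
      exact Subtype.ext (show ((⟨(x : H), hy⟩ : S.domain) : H) = (y' : H) from hxy)
  have hdeq : S.adjoint.domain = S.domain := le_antisymm h1.1 h2.1
  exact LinearPMap.eq_of_le_of_domain_eq h1 hdeq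



theorem moll_facts {S : H →ₗ.[ℂ] H} (hS : Sym S) {t : ℝ} (ht : 0 < t) {R : H →L[ℂ] H}
    (hR : Res S ((t : ℂ) * Complex.I) R) :
    (∀ v : H, ‖((-((t : ℂ) * Complex.I)) • R) v‖ ≤ ‖v‖) ∧
      (∀ x : S.domain, ‖((-((t : ℂ) * Complex.I)) • R) (x : H) - (x : H)‖ ≤ ‖(S x : H)‖ / t) ∧
      (∀ (x : H) (hx : x ∈ S.domain),
        ∃ h2 : ((-((t : ℂ) * Complex.I)) • R) x ∈ S.domain,
          S ⟨((-((t : ℂ) * Complex.I)) • R) x, h2⟩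
            = ((-((t : ℂ) * Complex.I)) • R) (S ⟨x, hx⟩)) := by
  have hnc : ‖-((t : ℂ) * Complex.I)‖ = t := by
    rw [norm_neg, norm_mul, Complex.norm_I, mul_one, Complex.norm_real, Real.norm_eq_abs,
      abs_of_pos ht]
  have happ : ∀ v : H, ((-((t : ℂ) * Complex.I)) • R) v = (-((t : ℂ) * Complex.I)) • R v :=
    fun v => rfl
  refine ⟨fun v => ?_, fun x => ?_, fun x hx => ?_⟩
  · rw [happ, norm_smul, hnc]
    have := hR.norm_le hS v
    rwa [abs_of_pos ht] at this
  · have hu := hR.unique hS ht.ne' x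
    have hx' : (x : H) = R (S x : H) - ((t : ℂ) * Complex.I) • R (x : H) := by
      rw [← map_smul, ← map_sub, hu]
    have hsub : ((-((t : ℂ) * Complex.I)) • R) (x : H) - (x : H) = -(R (S x : H)) := by
      rw [happ]
      nth_rewrite 2 [hx']
      rw [neg_smul]
      abel
    rw [hsub, norm_neg]
    have hb := hR.norm_le hS (S x : H)
    rw [abs_of_pos ht] at hb
    rw [le_div_iff₀ ht]
    nlinarith [norm_nonneg (R (S x : H))]
  · refine Res.commute_mem hS ht.ne' hR ((-((t : ℂ) * Complex.I)) • R) (fun h => ?_) hx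
    rw [happ, happ, map_smul]

theorem split_limit {D : Submodule ℂ H} (fa fb fc : ↥D →ₗ[ℂ] H)
    (hsum : ∀ x : ↥D, fc x = fa x + Complex.I • fb x)
    (hnorm : ∀ x : ↥D, ‖fa x‖ ≤ ‖fc x‖ ∧ ‖fb x‖ ≤ ‖fc x‖)
    {x y : H} (hxy : (x, y) ∈ closure ((⟨D, fc⟩ : H →ₗ.[ℂ] H).graph : Set (H × H))) :
    ∃ ya yb : H, (x, ya) ∈ closure ((⟨D, fa⟩ : H →ₗ.[ℂ] H).graph : Set (H × H)) ∧
      (x, yb) ∈ closure ((⟨D, fb⟩ : H →ₗ.[ℂ] H).graph : Set (H × H)) ∧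
      y = ya + Complex.I • yb := by
  obtain ⟨p, hp, hlim⟩ := mem_closure_iff_seq_limit.mp hxy
  have he : ∀ n, ∃ e : ↥D, (e : H) = (p n).1 ∧ fc e = (p n).2 := by
    intro n
    rcases (⟨D, fc⟩ : H →ₗ.[ℂ] H).mem_graph_iff.mp (hp n) with ⟨u, hu1, hu2⟩
    exact ⟨u, hu1, hu2⟩
  choose e he1 he2 using he
  have hex : Filter.Tendsto (fun n => (e n : H)) Filter.atTop (nhds x) := by
    have h1 := (continuous_fst.tendsto ((x, y) : H × H)).comp hlim
    exact h1.congr fun n => (he1 n).symm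
  have hfc : Filter.Tendsto (fun n => fc (e n)) Filter.atTop (nhds y) := by
    have h1 := (continuous_snd.tendsto ((x, y) : H × H)).comp hlim
    exact h1.congr fun n => (he2 n).symm
  have hcau : ∀ (f : ↥D →ₗ[ℂ] H), (∀ z : ↥D, ‖f z‖ ≤ ‖fc z‖) → CauchySeq (fun n => f (e n)) := by
    intro f hf
    rw [Metric.cauchySeq_iff]
    intro ε hε
    obtain ⟨N, hN⟩ := Metric.cauchySeq_iff.mp hfc.cauchySeq ε hε
    refine ⟨N, fun m hm n hn => ?_⟩
    have h1 := hN m hm n hn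
    have h2 : dist (f (e m)) (f (e n)) ≤ dist (fc (e m)) (fc (e n)) := by
      rw [dist_eq_norm, dist_eq_norm, ← map_sub, ← map_sub]
      exact hf (e m - e n)
    linarith
  obtain ⟨ya, hya⟩ := cauchySeq_tendsto_of_complete (hcau fa fun z => (hnorm z).1)
  obtain ⟨yb, hyb⟩ := cauchySeq_tendsto_of_complete (hcau fb fun z => (hnorm z).2)
  refine ⟨ya, yb, ?_, ?_, ?_⟩
  · refine mem_closure_of_tendsto (hex.prodMk_nhds hya) ?_
    refine Filter.Eventually.of_forall fun n => ?_
    exact (⟨D, fa⟩ : H →ₗ.[ℂ] H).mem_graph (e n)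
  · refine mem_closure_of_tendsto (hex.prodMk_nhds hyb) ?_
    refine Filter.Eventually.of_forall fun n => ?_
    exact (⟨D, fb⟩ : H →ₗ.[ℂ] H).mem_graph (e n)
  · have h2 : Filter.Tendsto (fun n => fc (e n)) Filter.atTop (nhds (ya + Complex.I • yb)) := by
      have h3 := hya.add (hyb.const_smul Complex.I)
      exact h3.congr fun n => (hsum (e n)).symm
    exact tendsto_nhds_unique hfc h2

theorem graph_trick {T : H →ₗ.[ℂ] H} {D' : Submodule ℂ H} (hD' : Dense (D' : Set H))
    {Φ : H → H × H} (hc : Continuous Φ)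
    (hmem : ∀ v ∈ (D' : Set H), Φ v ∈ (T.graph : Set (H × H))) (h : H) :
    Φ h ∈ closure (T.graph : Set (H × H)) := by
  have h1 : h ∈ closure (D' : Set H) := hD' h
  have h2 : Φ h ∈ Φ '' closure (D' : Set H) := ⟨h, h1, rfl⟩
  have h3 := (image_closure_subset_closure_image hc) h2
  exact closure_mono (Set.image_subset_iff.mpr hmem) h3

end Stmt3Aux

set_option maxHeartbeats 1600000 in
/-- For commuting selfadjoint `a, b` with spectra avoiding `±i` and
`c = a + i·b`, the operators `T_a`, `T_b` are essentially self-adjoint, `T_c` is closable,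
and `closure T_c = closure T_a + i • closure T_b` (equality of domains and of values). -/
theorem stmt3 {A : Type*} [Ring A] [Algebra ℂ A] [StarRing A] [StarModule ℂ A]
    {H : Type*} [NormedAddCommGroup H] [InnerProductSpace ℂ H] [CompleteSpace H]
    (D : Submodule ℂ H) (hD : Dense (D : Set H))
    (π : A →ₐ[ℂ] (D →ₗ[ℂ] D))
    (hπ : ∀ (d : A) (x y : D),
      ⟪((π d x : D) : H), (y : H)⟫_ℂ = ⟪(x : H), ((π (star d) y : D) : H)⟫_ℂ)
    (a b : A) (hsa : star a = a) (hsb : star b = b) (hab : a * b = b * a)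
    (hia : Complex.I ∉ spectrum ℂ a) (hmia : -Complex.I ∉ spectrum ℂ a)
    (hib : Complex.I ∉ spectrum ℂ b) (hmib : -Complex.I ∉ spectrum ℂ b)
    (c : A) (hc : c = a + Complex.I • b)
    (Ta Tb Tc : H →ₗ.[ℂ] H)
    (hTa : Ta = ⟨D, D.subtype.comp (π a)⟩)
    (hTb : Tb = ⟨D, D.subtype.comp (π b)⟩)
    (hTc : Tc = ⟨D, D.subtype.comp (π c)⟩) :
    (Ta.IsClosable ∧ IsSelfAdjoint Ta.closure) ∧
    (Tb.IsClosable ∧ IsSelfAdjoint Tb.closure) ∧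
    Tc.IsClosable ∧
    Tc.closure.domain = Ta.closure.domain ⊓ Tb.closure.domain ∧
    ∀ (x : H) (hxc : x ∈ Tc.closure.domain) (hxa : x ∈ Ta.closure.domain)
      (hxb : x ∈ Tb.closure.domain),
      Tc.closure ⟨x, hxc⟩ = Ta.closure ⟨x, hxa⟩ + Complex.I • Tb.closure ⟨x, hxb⟩ := by
  open Stmt3Aux in
  subst hc hTa hTb hTc
  set Ta : H →ₗ.[ℂ] H := ⟨D, D.subtype.comp (π a)⟩ with hTa
  set Tb : H →ₗ.[ℂ] H := ⟨D, D.subtype.comp (π b)⟩ with hTb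
  set Tc : H →ₗ.[ℂ] H := ⟨D, D.subtype.comp (π (a + Complex.I • b))⟩ with hTc
  -- cast helpers
  have h1I : (((1 : ℝ) : ℂ)) * Complex.I = Complex.I := by norm_num
  -- symmetry
  have hsym : ∀ d : A, star d = d → Stmt3Aux.Sym (⟨D, D.subtype.comp (π d)⟩ : H →ₗ.[ℂ] H) := by
    intro d hsd x y
    have h0 := hπ d x y
    rw [hsd] at h0
    exact h0
  have symA : Stmt3Aux.Sym Ta := hsym a hsa
  have symB : Stmt3Aux.Sym Tb := hsym b hsb
  have hclA : Ta.IsClosable := symA.isClosable hD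
  have hclB : Tb.IsClosable := symB.isClosable hD
  have symSA : Stmt3Aux.Sym Ta.closure := symA.closure hclA
  have symSB : Stmt3Aux.Sym Tb.closure := symB.closure hclB
  have hdenseA : Dense (Ta.closure.domain : Set H) :=
    hD.mono (fun z hz => (Ta.le_closure).1 hz)
  have hdenseB : Dense (Tb.closure.domain : Set H) :=
    hD.mono (fun z hz => (Tb.le_closure).1 hz)
  -- algebra: two-sided inverses
  have getr : ∀ (d : A) (μ : ℂ), μ ∉ spectrum ℂ d →
      ∃ r : A, (d - algebraMap ℂ A μ) * r = 1 ∧ r * (d - algebraMap ℂ A μ) = 1 := by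
    intro d μ hμ
    rw [spectrum.notMem_iff] at hμ
    obtain ⟨u, hu⟩ := hμ
    refine ⟨-(↑u⁻¹ : A), ?_, ?_⟩
    · have e1 : (d - algebraMap ℂ A μ) * -(↑u⁻¹ : A) = (algebraMap ℂ A μ - d) * (↑u⁻¹ : A) := by
        rw [mul_neg, ← neg_mul, neg_sub]
      rw [e1, ← hu, u.mul_inv]
    · have e1 : -(↑u⁻¹ : A) * (d - algebraMap ℂ A μ) = (↑u⁻¹ : A) * (algebraMap ℂ A μ - d) := by
        rw [neg_mul, ← mul_neg, neg_sub]
      rw [e1, ← hu, u.inv_mul]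
  obtain ⟨ra, hra1, hra2⟩ := getr a Complex.I hia
  obtain ⟨ram, hram1, hram2⟩ := getr a (-Complex.I) hmia
  obtain ⟨rb, hrb1, hrb2⟩ := getr b Complex.I hib
  obtain ⟨rbm, hrbm1, hrbm2⟩ := getr b (-Complex.I) hmib
  -- π values
  have hπval : ∀ (d r : A) (μ : ℂ), (d - algebraMap ℂ A μ) * r = 1 →
      ∀ y : ↥D, π d (π r y) = y + μ • (π r y) := by
    intro d r μ h1 y
    have h2 : d * r = 1 + algebraMap ℂ A μ * r := by
      calc d * r = (d * r - algebraMap ℂ A μ * r) + algebraMap ℂ A μ * r := by abel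
        _ = 1 + algebraMap ℂ A μ * r := by rw [← sub_mul, h1]
    have h3 : π d (π r y) = π (d * r) y := by rw [map_mul]; rfl
    rw [h3, h2, map_add, map_one, map_mul, AlgHom.commutes]
    simp [Module.End.mul_apply, Module.algebraMap_end_apply]
  -- bound on D for resolvents
  have hbound : ∀ (d r : A) (t : ℝ), star d = d →
      (d - algebraMap ℂ A ((t : ℂ) * Complex.I)) * r = 1 → |t| = 1 →
      ∀ y : ↥D, ‖((π r y : D) : H)‖ ≤ ‖(y : H)‖ := by
    intro d r t hsd h1 ht y
    set T : H →ₗ.[ℂ] H := ⟨D, D.subtype.comp (π d)⟩ with hT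
    have hb := Stmt3Aux.sym_bound (hsym d hsd) t (π r y : T.domain)
    have hval : (T (π r y) : H) = (y : H) + ((t : ℂ) * Complex.I) • ((π r y : D) : H) := by
      show ((π d (π r y) : D) : H) = _
      rw [hπval d r ((t : ℂ) * Complex.I) h1 y]
      push_cast
      rfl
    rw [hval] at hb
    have : ((y : H) + ((t : ℂ) * Complex.I) • ((π r y : D) : H))
        - ((t : ℂ) * Complex.I) • ((π r y : D) : H) = (y : H) := by abel
    rw [this, ht, one_mul] at hb
    exact hb
  -- continuous extensions
  have mkR : ∀ (r : A), (∀ y : ↥D, ‖((π r y : D) : H)‖ ≤ ‖(y : H)‖) →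
      ∃ R : H →L[ℂ] H, ∀ y : ↥D, R (y : H) = ((π r y : D) : H) := by
    intro r hf
    set f : ↥D →ₗ[ℂ] H := D.subtype.comp (π r) with hfdef
    have hb : ∀ y : ↥D, ‖f y‖ ≤ 1 * ‖(y : H)‖ := fun y => by rw [one_mul]; exact hf y
    set fc : ↥D →L[ℂ] H := f.mkContinuous 1 hb with hfc
    refine ⟨fc.extend D.subtypeL, fun y => ?_⟩
    have h1 := ContinuousLinearMap.extend_eq (f := fc) (e := D.subtypeL) hD.denseRange_val
      isUniformEmbedding_subtype_val.isUniformInducing y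
    simpa [hfc, hfdef] using h1
  -- cast forms of the inverse identities
  have hm1I : (((-1 : ℝ)) : ℂ) * Complex.I = -Complex.I := by norm_num
  have hra1' : (a - algebraMap ℂ A (((1 : ℝ) : ℂ) * Complex.I)) * ra = 1 := by rw [h1I]; exact hra1
  have hram1' : (a - algebraMap ℂ A ((((-1 : ℝ)) : ℂ) * Complex.I)) * ram = 1 := by
    rw [hm1I]; exact hram1
  have hrb1' : (b - algebraMap ℂ A (((1 : ℝ) : ℂ) * Complex.I)) * rb = 1 := by rw [h1I]; exact hrb1
  have hrbm1' : (b - algebraMap ℂ A ((((-1 : ℝ)) : ℂ) * Complex.I)) * rbm = 1 := by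
    rw [hm1I]; exact hrbm1
  obtain ⟨RA, hRA⟩ := mkR ra (hbound a ra 1 hsa hra1' (by norm_num))
  obtain ⟨RAm, hRAm⟩ := mkR ram (hbound a ram (-1) hsa hram1' (by norm_num))
  obtain ⟨RB, hRB⟩ := mkR rb (hbound b rb 1 hsb hrb1' (by norm_num))
  obtain ⟨RBm, hRBm⟩ := mkR rbm (hbound b rbm (-1) hsb hrbm1' (by norm_num))
  -- graph membership for resolvents
  have hgr : ∀ (d r : A) (μ : ℂ) (R : H →L[ℂ] H), (d - algebraMap ℂ A μ) * r = 1 →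
      (∀ y : ↥D, R (y : H) = ((π r y : D) : H)) → ∀ h : H,
      (R h, h + μ • R h) ∈
        closure (((⟨D, D.subtype.comp (π d)⟩ : H →ₗ.[ℂ] H)).graph : Set (H × H)) := by
    intro d r μ R h1 hRD h
    set T : H →ₗ.[ℂ] H := ⟨D, D.subtype.comp (π d)⟩ with hT
    have hc : Continuous (fun v : H => (v + μ • R v)) := by
      exact continuous_id.add (R.continuous.const_smul μ)
    refine Stmt3Aux.graph_trick hD (Φ := fun v : H => (R v, v + μ • R v))
      (R.continuous.prodMk hc) ?_ h
    intro v hv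
    set y : ↥D := ⟨v, hv⟩ with hy
    have hmem : ((R v, v + μ • R v) : H × H) ∈ T.graph := by
      rw [LinearPMap.mem_graph_iff]
      refine ⟨π r y, ?_, ?_⟩
      · exact (hRD y).symm
      · show ((π d (π r y) : D) : H) = v + μ • R v
        rw [hπval d r μ h1 y, hRD y]
        push_cast
        rfl
    exact hmem
  have resA : Stmt3Aux.Res Ta.closure Complex.I RA := fun h =>
    Stmt3Aux.closure_apply_of_mem_closure hclA (hgr a ra Complex.I RA hra1 hRA h)
  have resAm : Stmt3Aux.Res Ta.closure (-Complex.I) RAm := fun h =>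
    Stmt3Aux.closure_apply_of_mem_closure hclA (hgr a ram (-Complex.I) RAm hram1 hRAm h)
  have resB : Stmt3Aux.Res Tb.closure Complex.I RB := fun h =>
    Stmt3Aux.closure_apply_of_mem_closure hclB (hgr b rb Complex.I RB hrb1 hRB h)
  have resBm : Stmt3Aux.Res Tb.closure (-Complex.I) RBm := fun h =>
    Stmt3Aux.closure_apply_of_mem_closure hclB (hgr b rbm (-Complex.I) RBm hrbm1 hRBm h)
  have hsaA : IsSelfAdjoint Ta.closure := Stmt3Aux.selfAdjoint_of_res symSA hdenseA resA resAm
  have hsaB : IsSelfAdjoint Tb.closure := Stmt3Aux.selfAdjoint_of_res symSB hdenseB resB resBm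
  -- values of π c
  have hval_c : ∀ x : ↥D, ((π (a + Complex.I • b) x : D) : H)
      = ((π a x : D) : H) + Complex.I • ((π b x : D) : H) := by
    intro x
    rw [map_add, map_smul]
    push_cast
    rfl
  -- real inner products
  have hIm : ∀ x : ↥D, (⟪((π a x : D) : H), ((π b x : D) : H)⟫_ℂ).im = 0 := by
    intro x
    have h2 : π a (π b x) = π (a * b) x := by rw [map_mul]; rfl
    have h1 : ⟪((π a x : D) : H), ((π b x : D) : H)⟫_ℂ
        = ⟪(x : H), ((π (a * b) x : D) : H)⟫_ℂ := by
      have h0 := hπ a x (π b x)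
      rw [hsa] at h0
      rw [h0, h2]
    have h4 : star (a * b) = a * b := by rw [star_mul, hsa, hsb, ← hab]
    have h3 := hπ (a * b) x x
    rw [h4] at h3
    have h5 : ⟪((π (a * b) x : D) : H), (x : H)⟫_ℂ
        = starRingEnd ℂ ⟪(x : H), ((π (a * b) x : D) : H)⟫_ℂ := (inner_conj_symm _ _).symm
    rw [h5] at h3
    have h6 := congrArg Complex.im h3
    simp only [Complex.conj_im] at h6
    rw [h1]
    linarith
  -- norm comparison on D
  have hnormD : ∀ x : ↥D, ‖((π a x : D) : H)‖ ≤ ‖((π (a + Complex.I • b) x : D) : H)‖ ∧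
      ‖((π b x : D) : H)‖ ≤ ‖((π (a + Complex.I • b) x : D) : H)‖ := by
    intro x
    have hsq : ‖((π (a + Complex.I • b) x : D) : H)‖ ^ 2
        = ‖((π a x : D) : H)‖ ^ 2 + ‖((π b x : D) : H)‖ ^ 2 := by
      rw [hval_c x, @norm_add_sq ℂ]
      have h1 : RCLike.re ⟪((π a x : D) : H), Complex.I • ((π b x : D) : H)⟫_ℂ = (0 : ℝ) := by
        rw [inner_smul_right]
        simp only [RCLike.re_to_complex, Complex.mul_re, Complex.I_re, Complex.I_im]
        rw [hIm x]
        ring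
      have h2 : ‖Complex.I • ((π b x : D) : H)‖ = ‖((π b x : D) : H)‖ := by
        rw [norm_smul, Complex.norm_I, one_mul]
      rw [h1, h2]
      ring
    constructor
    · nlinarith [norm_nonneg ((π a x : D) : H), norm_nonneg ((π b x : D) : H),
        norm_nonneg ((π (a + Complex.I • b) x : D) : H)]
    · nlinarith [norm_nonneg ((π a x : D) : H), norm_nonneg ((π b x : D) : H),
        norm_nonneg ((π (a + Complex.I • b) x : D) : H)]
  -- repackage for split_limit
  have hsum' : ∀ x : ↥D, (D.subtype.comp (π (a + Complex.I • b))) x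
      = (D.subtype.comp (π a)) x + Complex.I • (D.subtype.comp (π b)) x := fun x => hval_c x
  have hnorm' : ∀ x : ↥D, ‖(D.subtype.comp (π a)) x‖ ≤ ‖(D.subtype.comp (π (a + Complex.I • b))) x‖
      ∧ ‖(D.subtype.comp (π b)) x‖ ≤ ‖(D.subtype.comp (π (a + Complex.I • b))) x‖ :=
    fun x => hnormD x
  -- closability of Tc
  have hclC : Tc.IsClosable := by
    refine ⟨(Tc.graph.topologicalClosure).toLinearPMap,
      (Submodule.toLinearPMap_graph_eq _ ?_).symm⟩
    rintro ⟨p1, p2⟩ hp hp1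
    have hp' : ((p1, p2) : H × H) ∈ closure (Tc.graph : Set (H × H)) := by
      rw [← Submodule.topologicalClosure_coe]
      exact hp
    simp only at hp1
    subst hp1
    obtain ⟨ya, yb, hga, hgb, hsum2⟩ :=
      Stmt3Aux.split_limit (D.subtype.comp (π a)) (D.subtype.comp (π b))
        (D.subtype.comp (π (a + Complex.I • b))) hsum' hnorm' hp'
    obtain ⟨hma, hva⟩ := Stmt3Aux.closure_apply_of_mem_closure hclA hga
    obtain ⟨hmb, hvb⟩ := Stmt3Aux.closure_apply_of_mem_closure hclB hgb
    have hza : ya = 0 := by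
      rw [← hva]
      have h0 : (⟨(0 : H), hma⟩ : Ta.closure.domain) = 0 := Subtype.ext rfl
      rw [h0]
      exact Ta.closure.toFun.map_zero
    have hzb : yb = 0 := by
      rw [← hvb]
      have h0 : (⟨(0 : H), hmb⟩ : Tb.closure.domain) = 0 := Subtype.ext rfl
      rw [h0]
      exact Tb.closure.toFun.map_zero
    simp only at hsum2 ⊢
    rw [hsum2, hza, hzb, smul_zero, add_zero]
  -- the ⊆ direction together with the value formula
  have hCval : ∀ (x : H) (hx : x ∈ Tc.closure.domain), ∃ (hxa : x ∈ Ta.closure.domain)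
      (hxb : x ∈ Tb.closure.domain),
      Tc.closure ⟨x, hx⟩ = Ta.closure ⟨x, hxa⟩ + Complex.I • Tb.closure ⟨x, hxb⟩ := by
    intro x hx
    have hmem := Stmt3Aux.mem_closure_graph hclC (⟨x, hx⟩ : Tc.closure.domain)
    obtain ⟨ya, yb, hga, hgb, hsum2⟩ :=
      Stmt3Aux.split_limit (D.subtype.comp (π a)) (D.subtype.comp (π b))
        (D.subtype.comp (π (a + Complex.I • b))) hsum' hnorm' hmem
    obtain ⟨hma, hva⟩ := Stmt3Aux.closure_apply_of_mem_closure hclA hga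
    obtain ⟨hmb, hvb⟩ := Stmt3Aux.closure_apply_of_mem_closure hclB hgb
    exact ⟨hma, hmb, by rw [hsum2, ← hva, ← hvb]⟩
  -- algebra commutation
  have commA : ∀ x y ry : A, x * y = y * x → y * ry = 1 → ry * y = 1 → x * ry = ry * x := by
    intro x y ry h1 h2 h3
    have e1 : x * ry = (ry * y) * (x * ry) := by rw [h3, one_mul]
    have e2 : (ry * y) * (x * ry) = ry * ((y * x) * ry) := by rw [mul_assoc, mul_assoc]
    have e3 : ry * ((y * x) * ry) = ry * ((x * y) * ry) := by rw [h1]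
    have e4 : ry * ((x * y) * ry) = ry * (x * (y * ry)) := by rw [mul_assoc]
    have e5 : ry * (x * (y * ry)) = ry * x := by rw [h2, mul_one]
    rw [e1, e2, e3, e4, e5]
  have huv : (a - algebraMap ℂ A Complex.I) * (b - algebraMap ℂ A Complex.I)
      = (b - algebraMap ℂ A Complex.I) * (a - algebraMap ℂ A Complex.I) := by
    simp only [sub_mul, mul_sub]
    rw [hab, Algebra.commutes Complex.I a, Algebra.commutes Complex.I b]
    abel
  have hbu : b * (a - algebraMap ℂ A Complex.I) = (a - algebraMap ℂ A Complex.I) * b := by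
    simp only [sub_mul, mul_sub]
    rw [hab, Algebra.commutes Complex.I b]
  have hbra : b * ra = ra * b := commA b (a - algebraMap ℂ A Complex.I) ra hbu hra1 hra2
  have hrau : ra * (b - algebraMap ℂ A Complex.I) = (b - algebraMap ℂ A Complex.I) * ra :=
    (commA (b - algebraMap ℂ A Complex.I) (a - algebraMap ℂ A Complex.I) ra huv.symm hra1
      hra2).symm
  have hrarb : ra * rb = rb * ra :=
    commA ra (b - algebraMap ℂ A Complex.I) rb hrau hrb1 hrb2
  -- commutation of the two basic resolvents
  have hABc : ∀ h : H, RA (RB h) = RB (RA h) := by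
    have hfun : (fun h : H => RA (RB h)) = (fun h : H => RB (RA h)) := by
      refine Continuous.ext_on hD (RA.continuous.comp RB.continuous)
        (RB.continuous.comp RA.continuous) ?_
      intro v hv
      show RA (RB v) = RB (RA v)
      have hv1 : v = ((⟨v, hv⟩ : ↥D) : H) := rfl
      rw [hv1, hRB ⟨v, hv⟩, hRA ⟨v, hv⟩, hRA (π rb ⟨v, hv⟩), hRB (π ra ⟨v, hv⟩)]
      have h1 : π ra (π rb ⟨v, hv⟩) = π (ra * rb) ⟨v, hv⟩ := by rw [map_mul]; rfl
      have h2 : π rb (π ra ⟨v, hv⟩) = π (rb * ra) ⟨v, hv⟩ := by rw [map_mul]; rfl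
      rw [h1, h2, hrarb]
    exact fun h => congrFun hfun h
  -- cast versions
  have resA1 : Stmt3Aux.Res Ta.closure (((1 : ℝ) : ℂ) * Complex.I) RA := by
    rw [h1I]; exact resA
  have resB1 : Stmt3Aux.Res Tb.closure (((1 : ℝ) : ℂ) * Complex.I) RB := by
    rw [h1I]; exact resB
  have uniqA : ∀ x : Ta.closure.domain,
      RA ((Ta.closure x : H) - Complex.I • (x : H)) = (x : H) := by
    intro x
    have h0 := resA1.unique symSA one_ne_zero x
    rwa [h1I] at h0
  have uniqB : ∀ x : Tb.closure.domain,
      RB ((Tb.closure x : H) - Complex.I • (x : H)) = (x : H) := by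
    intro x
    have h0 := resB1.unique symSB one_ne_zero x
    rwa [h1I] at h0
  -- resolvent families
  have hfamA : ∀ n : ℕ, ∃ R, Stmt3Aux.Res Ta.closure ((((n : ℝ) + 1 : ℝ) : ℂ) * Complex.I) R :=
    fun n => Stmt3Aux.Res.exists_of_pos symSA resA1 ((n : ℝ) + 1) (by positivity)
  have hfamB : ∀ n : ℕ, ∃ R, Stmt3Aux.Res Tb.closure ((((n : ℝ) + 1 : ℝ) : ℂ) * Complex.I) R :=
    fun n => Stmt3Aux.Res.exists_of_pos symSB resB1 ((n : ℝ) + 1) (by positivity)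
  choose RAn hRAn using hfamA
  choose RBn hRBn using hfamB
  have hne : ∀ n : ℕ, ((n : ℝ) + 1) ≠ 0 := fun n => by positivity
  have hpos : ∀ n : ℕ, (0 : ℝ) < (n : ℝ) + 1 := fun n => by positivity
  -- commutation chains
  have c1 : ∀ (x : H) (hx : x ∈ Ta.closure.domain), ∃ h2 : RB x ∈ Ta.closure.domain,
      Ta.closure ⟨RB x, h2⟩ = RB (Ta.closure ⟨x, hx⟩) :=
    fun x hx => Stmt3Aux.Res.commute_mem symSA one_ne_zero resA1 RB (fun h => (hABc h).symm) hx
  have c2 : ∀ (n : ℕ) (h : H), RB (RAn n h) = RAn n (RB h) :=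
    fun n => Stmt3Aux.Res.commute_clm symSA (hne n) (hRAn n) RB c1
  have c3 : ∀ (n : ℕ) (x : H) (hx : x ∈ Tb.closure.domain), ∃ h2 : RAn n x ∈ Tb.closure.domain,
      Tb.closure ⟨RAn n x, h2⟩ = RAn n (Tb.closure ⟨x, hx⟩) :=
    fun n x hx =>
      Stmt3Aux.Res.commute_mem symSB one_ne_zero resB1 (RAn n) (fun h => (c2 n h).symm) hx
  have c4 : ∀ (n : ℕ) (h : H), RAn n (RBn n h) = RBn n (RAn n h) :=
    fun n => Stmt3Aux.Res.commute_clm symSB (hne n) (hRBn n) (RAn n) (c3 n)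
  have c5 : ∀ (n : ℕ) (x : H) (hx : x ∈ Ta.closure.domain), ∃ h2 : RBn n x ∈ Ta.closure.domain,
      Ta.closure ⟨RBn n x, h2⟩ = RBn n (Ta.closure ⟨x, hx⟩) :=
    fun n x hx =>
      Stmt3Aux.Res.commute_mem symSA (hne n) (hRAn n) (RBn n) (fun h => (c4 n h).symm) hx
  -- mollifiers
  set An : ℕ → H →L[ℂ] H := fun n => (-((((n : ℝ) + 1 : ℝ) : ℂ) * Complex.I)) • RAn n with hAn
  set Bn : ℕ → H →L[ℂ] H := fun n => (-((((n : ℝ) + 1 : ℝ) : ℂ) * Complex.I)) • RBn n with hBn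
  have mfA := fun n : ℕ => Stmt3Aux.moll_facts symSA (hpos n) (hRAn n)
  have mfB := fun n : ℕ => Stmt3Aux.moll_facts symSB (hpos n) (hRBn n)
  have scale_comm : ∀ (S : H →ₗ.[ℂ] H) (R : H →L[ℂ] H) (cc : ℂ),
      (∀ (x : H) (hx : x ∈ S.domain), ∃ h2 : R x ∈ S.domain, S ⟨R x, h2⟩ = R (S ⟨x, hx⟩)) →
      ∀ (x : H) (hx : x ∈ S.domain), ∃ h2 : (cc • R) x ∈ S.domain,
        S ⟨(cc • R) x, h2⟩ = (cc • R) (S ⟨x, hx⟩) := by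
    intro S R cc hcom x hx
    obtain ⟨h2, hv⟩ := hcom x hx
    have hm : (cc • R) x ∈ S.domain := S.domain.smul_mem cc h2
    refine ⟨hm, ?_⟩
    have he : (⟨(cc • R) x, hm⟩ : S.domain) = cc • (⟨R x, h2⟩ : S.domain) := Subtype.ext rfl
    rw [he, S.map_smul, hv]
    rfl
  have cAnB : ∀ (n : ℕ) (x : H) (hx : x ∈ Tb.closure.domain),
      ∃ h2 : An n x ∈ Tb.closure.domain, Tb.closure ⟨An n x, h2⟩ = An n (Tb.closure ⟨x, hx⟩) :=
    fun n => scale_comm Tb.closure (RAn n) _ (c3 n)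
  have cBnA : ∀ (n : ℕ) (x : H) (hx : x ∈ Ta.closure.domain),
      ∃ h2 : Bn n x ∈ Ta.closure.domain, Ta.closure ⟨Bn n x, h2⟩ = Bn n (Ta.closure ⟨x, hx⟩) :=
    fun n => scale_comm Ta.closure (RBn n) _ (c5 n)
  -- strong convergence of the mollifiers
  have tA : ∀ v : H, Filter.Tendsto (fun n => An n v) Filter.atTop (nhds v) :=
    Stmt3Aux.tendsto_of_bounds An Ta.closure hdenseA (fun n => (mfA n).1)
      (fun n => (mfA n).2.1)
  have tB : ∀ v : H, Filter.Tendsto (fun n => Bn n v) Filter.atTop (nhds v) :=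
    Stmt3Aux.tendsto_of_bounds Bn Tb.closure hdenseB (fun n => (mfB n).1)
      (fun n => (mfB n).2.1)
  have tAB : ∀ v : H, Filter.Tendsto (fun n => An n (Bn n v)) Filter.atTop (nhds v) := by
    intro v
    rw [tendsto_iff_norm_sub_tendsto_zero]
    have hg : Filter.Tendsto (fun n => ‖Bn n v - v‖ + ‖An n v - v‖) Filter.atTop (nhds 0) := by
      have h1 := tendsto_iff_norm_sub_tendsto_zero.mp (tB v)
      have h2 := tendsto_iff_norm_sub_tendsto_zero.mp (tA v)
      simpa using h1.add h2
    refine squeeze_zero (fun n => norm_nonneg _) (fun n => ?_) hg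
    have h3 : An n (Bn n v) - v = (An n (Bn n v) - An n v) + (An n v - v) := by abel
    rw [h3]
    refine (norm_add_le (An n (Bn n v) - An n v) (An n v - v)).trans ?_
    have h4 : An n (Bn n v) - An n v = An n (Bn n v - v) := by rw [map_sub]
    rw [h4]
    have h5 := (mfA n).1 (Bn n v - v)
    linarith
  -- restated mollifier facts
  have mfA3 : ∀ (n : ℕ) (x : H) (hx : x ∈ Ta.closure.domain),
      ∃ h2 : An n x ∈ Ta.closure.domain,
        Ta.closure ⟨An n x, h2⟩ = An n (Ta.closure ⟨x, hx⟩) := fun n => (mfA n).2.2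
  have mfB3 : ∀ (n : ℕ) (x : H) (hx : x ∈ Tb.closure.domain),
      ∃ h2 : Bn n x ∈ Tb.closure.domain,
        Tb.closure ⟨Bn n x, h2⟩ = Bn n (Tb.closure ⟨x, hx⟩) := fun n => (mfB n).2.2
  have memBn : ∀ (n : ℕ) (v : H), Bn n v ∈ Tb.closure.domain := by
    intro n v
    obtain ⟨hm, -⟩ := hRBn n v
    exact Tb.closure.domain.smul_mem _ hm
  -- D-level values for the double resolvent
  have dv1 : ∀ y : ↥D, π a (π ra (π rb y)) = π rb y + Complex.I • π ra (π rb y) :=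
    fun y => hπval a ra Complex.I hra1 (π rb y)
  have dv2 : ∀ y : ↥D, π b (π ra (π rb y)) = π ra y + Complex.I • π ra (π rb y) := by
    intro y
    have h1 : π b (π ra (π rb y)) = π ra (π b (π rb y)) := by
      have e1 : π b (π ra (π rb y)) = π (b * ra) (π rb y) := by rw [map_mul]; rfl
      have e2 : π (ra * b) (π rb y) = π ra (π b (π rb y)) := by rw [map_mul]; rfl
      rw [e1, hbra, e2]
    rw [h1, hπval b rb Complex.I hrb1 y, (π ra).map_add, (π ra).map_smul]
  -- double-resolvent graph facts
  have hEa : ∀ k : H, ((RA (RB k), RB k + Complex.I • RA (RB k)) : H × H)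
      ∈ closure (Ta.graph : Set (H × H)) := by
    intro k
    have hcont : Continuous (fun v : H => ((RA (RB v), RB v + Complex.I • RA (RB v)) : H × H)) := by
      exact (RA.continuous.comp RB.continuous).prodMk
        (RB.continuous.add ((RA.continuous.comp RB.continuous).const_smul _))
    refine Stmt3Aux.graph_trick hD hcont ?_ k
    intro v hv
    set y : ↥D := ⟨v, hv⟩ with hy
    have e1 : RB v = ((π rb y : D) : H) := hRB y
    have e2 : RA (RB v) = ((π ra (π rb y) : D) : H) := by rw [e1]; exact hRA (π rb y)
    have hmem : ((RA (RB v), RB v + Complex.I • RA (RB v)) : H × H) ∈ Ta.graph := by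
      rw [LinearPMap.mem_graph_iff]
      refine ⟨π ra (π rb y), e2.symm, ?_⟩
      show ((π a (π ra (π rb y)) : D) : H) = RB v + Complex.I • RA (RB v)
      rw [dv1 y, e2, e1]
      push_cast
      rfl
    exact hmem
  have hEb : ∀ k : H, ((RA (RB k), RA k + Complex.I • RA (RB k)) : H × H)
      ∈ closure (Tb.graph : Set (H × H)) := by
    intro k
    have hcont : Continuous (fun v : H => ((RA (RB v), RA v + Complex.I • RA (RB v)) : H × H)) := by
      exact (RA.continuous.comp RB.continuous).prodMk
        (RA.continuous.add ((RA.continuous.comp RB.continuous).const_smul _))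
    refine Stmt3Aux.graph_trick hD hcont ?_ k
    intro v hv
    set y : ↥D := ⟨v, hv⟩ with hy
    have e1 : RB v = ((π rb y : D) : H) := hRB y
    have e2 : RA (RB v) = ((π ra (π rb y) : D) : H) := by rw [e1]; exact hRA (π rb y)
    have e3 : RA v = ((π ra y : D) : H) := hRA y
    have hmem : ((RA (RB v), RA v + Complex.I • RA (RB v)) : H × H) ∈ Tb.graph := by
      rw [LinearPMap.mem_graph_iff]
      refine ⟨π ra (π rb y), e2.symm, ?_⟩
      show ((π b (π ra (π rb y)) : D) : H) = RA v + Complex.I • RA (RB v)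
      rw [dv2 y, e2, e3]
      push_cast
      rfl
    exact hmem
  have hEc : ∀ k : H, ((RA (RB k), (RB k + Complex.I • RA (RB k))
      + Complex.I • (RA k + Complex.I • RA (RB k))) : H × H)
      ∈ closure (Tc.graph : Set (H × H)) := by
    intro k
    have hc1 : Continuous fun v : H => RA (RB v) := RA.continuous.comp RB.continuous
    have hcont : Continuous (fun v : H => ((RA (RB v), (RB v + Complex.I • RA (RB v))
        + Complex.I • (RA v + Complex.I • RA (RB v))) : H × H)) := by
      exact hc1.prodMk ((RB.continuous.add (hc1.const_smul _)).add
        ((RA.continuous.add (hc1.const_smul _)).const_smul _))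
    refine Stmt3Aux.graph_trick hD hcont ?_ k
    intro v hv
    set y : ↥D := ⟨v, hv⟩ with hy
    have e1 : RB v = ((π rb y : D) : H) := hRB y
    have e2 : RA (RB v) = ((π ra (π rb y) : D) : H) := by rw [e1]; exact hRA (π rb y)
    have e3 : RA v = ((π ra y : D) : H) := hRA y
    have hmem : ((RA (RB v), (RB v + Complex.I • RA (RB v))
        + Complex.I • (RA v + Complex.I • RA (RB v))) : H × H) ∈ Tc.graph := by
      rw [LinearPMap.mem_graph_iff]
      refine ⟨π ra (π rb y), e2.symm, ?_⟩
      show ((π (a + Complex.I • b) (π ra (π rb y)) : D) : H) = _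
      rw [hval_c (π ra (π rb y)), dv1 y, dv2 y, e2, e1, e3]
      push_cast
      rfl
    exact hmem
  -- the ⊇ direction
  have hsup : ∀ (x : H) (hxa : x ∈ Ta.closure.domain) (hxb : x ∈ Tb.closure.domain),
      ((x, (Ta.closure ⟨x, hxa⟩ : H) + Complex.I • (Tb.closure ⟨x, hxb⟩ : H)) : H × H)
        ∈ closure (Tc.graph : Set (H × H)) := by
    intro x hxa hxb
    have key : ∀ n : ℕ, ∃ (hpa : An n (Bn n x) ∈ Ta.closure.domain)
        (hpb : An n (Bn n x) ∈ Tb.closure.domain),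
        Ta.closure ⟨An n (Bn n x), hpa⟩ = An n (Bn n (Ta.closure ⟨x, hxa⟩)) ∧
        Tb.closure ⟨An n (Bn n x), hpb⟩ = An n (Bn n (Tb.closure ⟨x, hxb⟩)) ∧
        ((An n (Bn n x), (Ta.closure ⟨An n (Bn n x), hpa⟩ : H)
          + Complex.I • (Tb.closure ⟨An n (Bn n x), hpb⟩ : H)) : H × H)
          ∈ closure (Tc.graph : Set (H × H)) := by
      intro n
      obtain ⟨hb1, hv1⟩ := cBnA n x hxa
      obtain ⟨ha1, hw1⟩ := mfA3 n (Bn n x) hb1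
      obtain ⟨hb2, hv2⟩ := mfB3 n x hxb
      obtain ⟨ha2, hw2⟩ := cAnB n (Bn n x) hb2
      have hSa : Ta.closure ⟨An n (Bn n x), ha1⟩ = An n (Bn n (Ta.closure ⟨x, hxa⟩)) := by
        rw [hw1, hv1]
      have hSb : Tb.closure ⟨An n (Bn n x), ha2⟩ = An n (Bn n (Tb.closure ⟨x, hxb⟩)) := by
        rw [hw2, hv2]
      have hSaInB : (Ta.closure ⟨An n (Bn n x), ha1⟩ : H) ∈ Tb.closure.domain := by
        rw [hSa]
        obtain ⟨hh, -⟩ := cAnB n (Bn n ((Ta.closure ⟨x, hxa⟩ : H)))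
          (memBn n (Ta.closure ⟨x, hxa⟩ : H))
        exact hh
      have hwB : (Ta.closure ⟨An n (Bn n x), ha1⟩ : H) - Complex.I • (An n (Bn n x))
          ∈ Tb.closure.domain :=
        Tb.closure.domain.sub_mem hSaInB (Tb.closure.domain.smul_mem _ ha2)
      set w : H := (Ta.closure ⟨An n (Bn n x), ha1⟩ : H) - Complex.I • (An n (Bn n x))
        with hwdef
      set k : H := (Tb.closure ⟨w, hwB⟩ : H) - Complex.I • w with hkdef
      have hRBk : RB k = w := uniqB ⟨w, hwB⟩
      have hRAw : RA w = An n (Bn n x) := uniqA ⟨An n (Bn n x), ha1⟩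
      have hpneq : An n (Bn n x) = RA (RB k) := by rw [hRBk, hRAw]
      obtain ⟨hma', hva'⟩ := Stmt3Aux.closure_apply_of_mem_closure hclA (hEa k)
      obtain ⟨hmb', hvb'⟩ := Stmt3Aux.closure_apply_of_mem_closure hclB (hEb k)
      have hSaval : (Ta.closure ⟨An n (Bn n x), ha1⟩ : H)
          = RB k + Complex.I • (An n (Bn n x)) := by
        have he : Ta.closure ⟨An n (Bn n x), ha1⟩ = Ta.closure ⟨RA (RB k), hma'⟩ := by
          congr 1
          exact Subtype.ext hpneq
        rw [he, hva', ← hpneq]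
      have hSbval : (Tb.closure ⟨An n (Bn n x), ha2⟩ : H)
          = RA k + Complex.I • (An n (Bn n x)) := by
        have he : Tb.closure ⟨An n (Bn n x), ha2⟩ = Tb.closure ⟨RA (RB k), hmb'⟩ := by
          congr 1
          exact Subtype.ext hpneq
        rw [he, hvb', ← hpneq]
      have hmemc := hEc k
      have hpair : ((RA (RB k), (RB k + Complex.I • RA (RB k))
          + Complex.I • (RA k + Complex.I • RA (RB k))) : H × H)
          = ((An n (Bn n x), (Ta.closure ⟨An n (Bn n x), ha1⟩ : H)
            + Complex.I • (Tb.closure ⟨An n (Bn n x), ha2⟩ : H)) : H × H) := by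
        rw [← hpneq, hSaval, hSbval]
      rw [hpair] at hmemc
      exact ⟨ha1, ha2, hSa, hSb, hmemc⟩
    choose hpa hpb hSa hSb hmem using key
    have hlim : Filter.Tendsto
        (fun n => ((An n (Bn n x), (Ta.closure ⟨An n (Bn n x), hpa n⟩ : H)
          + Complex.I • (Tb.closure ⟨An n (Bn n x), hpb n⟩ : H)) : H × H))
        Filter.atTop
        (nhds ((x, (Ta.closure ⟨x, hxa⟩ : H) + Complex.I • (Tb.closure ⟨x, hxb⟩ : H)) : H × H)) := by
      refine Filter.Tendsto.prodMk_nhds (tAB x) ?_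
      have h1 := tAB ((Ta.closure ⟨x, hxa⟩ : H))
      have h2 := (tAB ((Tb.closure ⟨x, hxb⟩ : H))).const_smul Complex.I
      refine (h1.add h2).congr fun n => ?_
      rw [hSa n, hSb n]
    have hfin := mem_closure_of_tendsto hlim (Filter.Eventually.of_forall hmem)
    rwa [closure_closure] at hfin
  -- conclusion
  refine ⟨⟨hclA, hsaA⟩, ⟨hclB, hsaB⟩, hclC, ?_, ?_⟩
  · apply le_antisymm
    · intro x hx
      obtain ⟨hxa, hxb, -⟩ := hCval x hx
      exact Submodule.mem_inf.mpr ⟨hxa, hxb⟩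
    · intro x hx
      obtain ⟨hxa, hxb⟩ := Submodule.mem_inf.mp hx
      obtain ⟨hx', -⟩ := Stmt3Aux.closure_apply_of_mem_closure hclC (hsup x hxa hxb)
      exact hx'
  · intro x hxc hxa hxb
    obtain ⟨hx', hv⟩ := Stmt3Aux.closure_apply_of_mem_closure hclC (hsup x hxa hxb)
    have he : Tc.closure ⟨x, hxc⟩ = Tc.closure ⟨x, hx'⟩ := rfl
    rw [he, hv]
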